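/- Suppose (x⋆, y⋆, w⋆) is a fixed point of the centralized consensus ADMM iteration xᵢ = ave(x) - (yᵢ + wᵢ)/ρ, yᵢ = ave(w) - wᵢ, wᵢ = ∇fᵢ(xᵢ), with ρ > 0 and each fᵢ differentiable convex. Then x₁⋆ = x₂⋆ = ⋯ = xₙ⋆, Σᵢ wᵢ⋆ = 0, and the common value x₁⋆ minimizes f₀ = (1/n)Σᵢ fᵢ. -/

import Mathlib

open Matrix Finset RealInnerProductSpace

lemma grad_ineq {E : Type*} [NormedAddCommGroup E] [InnerProductSpace ℝ E] [CompleteSpace E]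
    {f : E → ℝ} (hc : ConvexOn ℝ Set.univ f) (hd : Differentiable ℝ f) (x z : E) :
    f x + ⟪gradient f x, z - x⟫ ≤ f z := by
  set φ : ℝ → ℝ := fun t => f (x + t • (z - x)) with hφdef
  have hline : ∀ t : ℝ, HasDerivAt (fun s : ℝ => x + s • (z - x)) (z - x) t := fun t => by
    simpa using ((hasDerivAt_id t).smul_const (z - x)).const_add x
  have hgrad : HasFDerivAt f ((InnerProductSpace.toDual ℝ E) (gradient f x)) x :=
    hasGradientAt_iff_hasFDerivAt.mp (hd x).hasGradientAt
  have hφ0 : HasDerivAt φ ⟪gradient f x, z - x⟫ 0 := by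
    have hgrad' : HasFDerivAt f ((InnerProductSpace.toDual ℝ E) (gradient f x))
        (x + (0:ℝ) • (z - x)) := by simpa using hgrad
    have h1 := hgrad'.comp_hasDerivAt (0:ℝ) (hline 0)
    exact h1
  have hφc : ConvexOn ℝ Set.univ φ := by
    have hcomp := hc.comp_affineMap (AffineMap.lineMap x z)
    simp only [Set.preimage_univ] at hcomp
    have key : (f ∘ ⇑(AffineMap.lineMap x z)) = φ := by
      funext t
      simp only [hφdef, Function.comp_apply, AffineMap.lineMap_apply]
      congr 1
      rw [vsub_eq_sub, vadd_eq_add, smul_sub]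
      abel
    rwa [key] at hcomp
  have hs := hφc.le_slope_of_hasDerivAt (Set.mem_univ (0:ℝ)) (Set.mem_univ (1:ℝ))
    (by norm_num) hφ0
  have : slope φ 0 1 = φ 1 - φ 0 := by simp [slope]
  rw [this] at hs
  have hφ1 : φ 1 = f z := by simp [hφdef]
  have hφz : φ 0 = f x := by simp [hφdef]
  linarith

/-- At a fixed point of the centralized consensus ADMM iteration, all local variables agree,
the gradients sum to zero, and the common value minimizes `f₀ = (1/n) ∑ᵢ fᵢ`. -/
theorem stmt18 {n d : ℕ} (hn : 0 < n) (ρ : ℝ) (hρ : 0 < ρ)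
    (f : Fin n → EuclideanSpace ℝ (Fin d) → ℝ)
    (hconv : ∀ i, ConvexOn ℝ Set.univ (f i))
    (hdiff : ∀ i, Differentiable ℝ (f i))
    (x y w : Fin n → EuclideanSpace ℝ (Fin d))
    (hx : ∀ i, x i = (n : ℝ)⁻¹ • (∑ j, x j) - ρ⁻¹ • (y i + w i))
    (hy : ∀ i, y i = (n : ℝ)⁻¹ • (∑ j, w j) - w i)
    (hw : ∀ i, w i = gradient (f i) (x i)) :
    (∀ i j, x i = x j) ∧ (∑ i, w i) = 0 ∧
      ∀ i, IsMinOn (fun z => (n : ℝ)⁻¹ * ∑ j, f j z) Set.univ (x i) := by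
  have hn' : (n : ℝ) ≠ 0 := Nat.cast_ne_zero.mpr hn.ne'
  have hninv : (n : ℕ) • ((n : ℝ)⁻¹ • (∑ j, w j)) = ∑ j, w j := by
    rw [← Nat.cast_smul_eq_nsmul ℝ, smul_smul, mul_inv_cancel₀ hn', one_smul]
  have hSy : ∑ i, y i = 0 := by
    calc ∑ i, y i = ∑ i : Fin n, ((n : ℝ)⁻¹ • (∑ j, w j) - w i) :=
          Finset.sum_congr rfl fun i _ => hy i
      _ = (n : ℕ) • ((n : ℝ)⁻¹ • (∑ j, w j)) - ∑ i, w i := by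
          rw [Finset.sum_sub_distrib, Finset.sum_const, Finset.card_univ, Fintype.card_fin]
      _ = 0 := by rw [hninv, sub_self]
  have hSw : ∑ i, w i = 0 := by
    have hSx : ∑ i, x i = ∑ i : Fin n, ((n : ℝ)⁻¹ • (∑ j, x j) - ρ⁻¹ • (y i + w i)) :=
      Finset.sum_congr rfl fun i _ => hx i
    have hninvx : (n : ℕ) • ((n : ℝ)⁻¹ • (∑ j, x j)) = ∑ j, x j := by
      rw [← Nat.cast_smul_eq_nsmul ℝ, smul_smul, mul_inv_cancel₀ hn', one_smul]
    rw [Finset.sum_sub_distrib, Finset.sum_const, Finset.card_univ, Fintype.card_fin,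
      hninvx, ← Finset.smul_sum, Finset.sum_add_distrib, hSy, zero_add] at hSx
    have h0 : ρ⁻¹ • (∑ i, w i) = 0 := by
      have := sub_eq_iff_eq_add.mp hSx.symm
      linear_combination (norm := abel) -this
    have hinj := smul_right_injective (EuclideanSpace ℝ (Fin d)) (inv_ne_zero hρ.ne')
    have := hinj (a₁ := ∑ i, w i) (a₂ := 0) (by simpa using h0)
    simpa using this
  have hyw : ∀ i, y i + w i = 0 := fun i => by
    rw [hy i, hSw]; simp
  have hxeq : ∀ i, x i = (n : ℝ)⁻¹ • (∑ j, x j) := fun i => by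
    rw [hx i, hyw i]; simp
  refine ⟨fun i j => by rw [hxeq i, hxeq j], hSw, fun i => ?_⟩
  rw [isMinOn_iff]
  intro z _
  have hkey : ∀ j, f j (x i) + ⟪w j, z - x i⟫ ≤ f j z := fun j => by
    have := grad_ineq (hconv j) (hdiff j) (x j) z
    rw [← hw j] at this
    rwa [show x j = x i by rw [hxeq i, hxeq j]] at this
  have hsum : (∑ j, f j (x i)) + ∑ j, ⟪w j, z - x i⟫ ≤ ∑ j, f j z := by
    rw [← Finset.sum_add_distrib]
    exact Finset.sum_le_sum fun j _ => hkey j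
  have hzero : ∑ j, ⟪w j, z - x i⟫ = 0 := by
    rw [← sum_inner, hSw, inner_zero_left]
  rw [hzero, add_zero] at hsum
  have : (0:ℝ) ≤ (n : ℝ)⁻¹ := by positivity
  exact mul_le_mul_of_nonneg_left hsum this
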